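/- In the discrete phase shifting model, the probability of non-zero secrecy capacity P(γ_B > γ_E) is independent of L: with γ_B exponential of mean Lγ̄_B and γ_E = γ̄_E X/Y (X exponential mean L independent of Y supported on [R₁^δ, R₂^δ]), one has P(γ_B > γ_E) = (2/(δ(R₂²−R₁²))) ∫_{R₁^δ}^{R₂^δ} y^{2/δ−1} · (γ̄_B y)/(γ̄_B y + γ̄_E) dy, which does not depend on L. -/

import Mathlib

open MeasureTheory ProbabilityTheory Real Set Filter

/-- Exponential distribution with mean `m` (density `m⁻¹ e^{-x/m}` on `x ≥ 0`). -/
noncomputable def expMean (m : ℝ) : Measure ℝ :=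
  volume.withDensity fun x => ENNReal.ofReal (if 0 ≤ x then m⁻¹ * Real.exp (-x / m) else 0)

/-- Path-loss distribution: density `(2/δ) y^{2/δ-1}/(R₂²-R₁²)` on `[R₁^δ, R₂^δ]`. -/
noncomputable def pathLossMeasure (δ R₁ R₂ : ℝ) : Measure ℝ :=
  volume.withDensity fun y => ENNReal.ofReal
    (if y ∈ Set.Icc (R₁ ^ δ) (R₂ ^ δ) then 2 / δ * y ^ (2 / δ - 1) / (R₂ ^ 2 - R₁ ^ 2) else 0)

/-- Lower incomplete gamma function `γinc(a,x) = ∫₀ˣ t^{a-1} e^{-t} dt`. -/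
noncomputable def lowerGamma (a x : ℝ) : ℝ := ∫ t in (0:ℝ)..x, t ^ (a - 1) * Real.exp (-t)

lemma integral_exp_neg_mul_Ioi' {b : ℝ} (hb : 0 < b) (t : ℝ) :
    ∫ x in Ioi t, Real.exp (-(b * x)) = b⁻¹ * Real.exp (-(b * t)) := by
  have h := integral_comp_mul_left_Ioi (fun x => Real.exp (-x)) t hb
  simp only [integral_exp_neg_Ioi, smul_eq_mul] at h
  rw [h]

lemma expMean_density_meas (m : ℝ) :
    Measurable fun x : ℝ => ENNReal.ofReal (if 0 ≤ x then m⁻¹ * Real.exp (-x / m) else 0) := by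
  apply Measurable.ennreal_ofReal
  apply Measurable.ite measurableSet_Ici (by fun_prop) measurable_const

lemma expMean_neg_null {m : ℝ} : expMean m {x : ℝ | x < 0} = 0 := by
  have h : {x : ℝ | x < 0} = Iio (0:ℝ) := rfl
  rw [expMean, h, withDensity_apply _ measurableSet_Iio]
  have h2 : ∫⁻ x in Iio (0:ℝ),
      ENNReal.ofReal (if 0 ≤ x then m⁻¹ * Real.exp (-x / m) else 0) = ∫⁻ _ in Iio (0:ℝ), 0 :=
    setLIntegral_congr_fun measurableSet_Iio
      (fun x (hx : x < 0) => by simp [not_le.2 hx])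
  rw [h2]; simp

lemma expMean_tail {m : ℝ} (hm : 0 < m) {t : ℝ} (ht : 0 ≤ t) :
    expMean m (Ioi t) = ENNReal.ofReal (Real.exp (-(t / m))) := by
  rw [expMean, withDensity_apply _ measurableSet_Ioi]
  have h2 : ∫⁻ x in Ioi t,
      ENNReal.ofReal (if 0 ≤ x then m⁻¹ * Real.exp (-x / m) else 0)
      = ∫⁻ x in Ioi t, ENNReal.ofReal (m⁻¹ * Real.exp (-(m⁻¹ * x))) := by
    apply setLIntegral_congr_fun measurableSet_Ioi
    refine fun x (hx : t < x) => ?_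
    simp only [if_pos (ht.trans hx.le)]
    ring_nf
  rw [h2]
  have hint : IntegrableOn (fun x => m⁻¹ * Real.exp (-(m⁻¹ * x))) (Ioi t) := by
    have h := (exp_neg_integrableOn_Ioi t (inv_pos.2 hm)).const_mul m⁻¹; simp only [neg_mul] at h; exact h
  rw [← ofReal_integral_eq_lintegral_ofReal hint (ae_of_all _ fun x => by positivity)]
  rw [MeasureTheory.integral_const_mul, integral_exp_neg_mul_Ioi' (inv_pos.2 hm)]
  congr 1
  rw [← mul_assoc]
  field_simp

lemma expMean_laplace {m : ℝ} (hm : 0 < m) {c : ℝ} (hc : 0 ≤ c) :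
    ∫⁻ x, ENNReal.ofReal (Real.exp (-(c * x))) ∂(expMean m)
      = ENNReal.ofReal (1 / (1 + c * m)) := by
  rw [expMean, lintegral_withDensity_eq_lintegral_mul _
    (expMean_density_meas m) (by fun_prop)]
  have h0 : ∀ x : ℝ, (ENNReal.ofReal (if 0 ≤ x then m⁻¹ * Real.exp (-x / m) else 0)
      * ENNReal.ofReal (Real.exp (-(c * x))))
      = Set.indicator (Ioi 0) (fun x => ENNReal.ofReal (m⁻¹ * Real.exp (-((m⁻¹ + c) * x)))) x
        + Set.indicator {(0:ℝ)} (fun _ => ENNReal.ofReal m⁻¹) x := by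
    intro x
    rcases lt_trichotomy x 0 with hx | hx | hx
    · rw [if_neg (not_le.2 hx),
        indicator_of_notMem (show x ∉ Ioi (0:ℝ) from not_lt.2 hx.le),
        indicator_of_notMem (show x ∉ ({0} : Set ℝ) by simp [hx.ne])]
      simp
    · subst hx; simp [indicator]
    · rw [indicator_of_mem (show x ∈ Ioi (0:ℝ) from hx),
        indicator_of_notMem (show x ∉ ({0} : Set ℝ) by simp [hx.ne']),
        if_pos hx.le, ← ENNReal.ofReal_mul (by positivity), add_zero]
      congr 1
      rw [mul_assoc, ← Real.exp_add]
      ring_nf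
  simp only [Pi.mul_apply, h0]
  rw [lintegral_add_right _ ((measurable_const.indicator (measurableSet_singleton _)))]
  have hz : (∫⁻ x, Set.indicator {(0:ℝ)} (fun _ => ENNReal.ofReal m⁻¹) x) = 0 := by
    rw [lintegral_indicator (measurableSet_singleton (0:ℝ)) _]
    simp
  rw [hz, add_zero, lintegral_indicator measurableSet_Ioi _]
  have hbc : 0 < m⁻¹ + c := by positivity
  have hint : IntegrableOn (fun x => m⁻¹ * Real.exp (-((m⁻¹ + c) * x))) (Ioi (0:ℝ)) := by
    have h := (exp_neg_integrableOn_Ioi 0 hbc).const_mul m⁻¹; simp only [neg_mul] at h; exact h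
  rw [← ofReal_integral_eq_lintegral_ofReal hint (ae_of_all _ fun x => by positivity)]
  rw [MeasureTheory.integral_const_mul, integral_exp_neg_mul_Ioi' hbc]
  congr 1
  rw [mul_zero, neg_zero, Real.exp_zero, mul_one]
  field_simp

lemma pathLoss_density_meas (δ R₁ R₂ : ℝ) :
    Measurable fun y : ℝ => ENNReal.ofReal
      (if y ∈ Set.Icc (R₁ ^ δ) (R₂ ^ δ) then 2 / δ * y ^ (2 / δ - 1) / (R₂ ^ 2 - R₁ ^ 2) else 0) := by
  apply Measurable.ennreal_ofReal
  apply Measurable.ite measurableSet_Icc ?_ measurable_const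
  fun_prop

lemma pathLoss_compl_null {δ R₁ R₂ : ℝ} :
    pathLossMeasure δ R₁ R₂ (Set.Icc (R₁ ^ δ) (R₂ ^ δ))ᶜ = 0 := by
  rw [pathLossMeasure, withDensity_apply _ measurableSet_Icc.compl]
  have h2 : ∫⁻ y in (Set.Icc (R₁ ^ δ) (R₂ ^ δ))ᶜ,
      ENNReal.ofReal (if y ∈ Set.Icc (R₁ ^ δ) (R₂ ^ δ)
        then 2 / δ * y ^ (2 / δ - 1) / (R₂ ^ 2 - R₁ ^ 2) else 0)
      = ∫⁻ _ in (Set.Icc (R₁ ^ δ) (R₂ ^ δ))ᶜ, 0 :=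
    setLIntegral_congr_fun measurableSet_Icc.compl
      (fun y hy => by simp only [if_neg hy, ENNReal.ofReal_zero])
  rw [h2]; simp

lemma pathLoss_lintegral {δ R₁ R₂ gB gE : ℝ} (hδ : 0 < δ) (hR₁ : 0 < R₁) (hR : R₁ < R₂)
    (hgB : 0 < gB) (hgE : 0 < gE) :
    ∫⁻ y, ENNReal.ofReal (gB * y / (gB * y + gE)) ∂(pathLossMeasure δ R₁ R₂)
      = ENNReal.ofReal (2 / (δ * (R₂ ^ 2 - R₁ ^ 2)) *
          ∫ y in R₁ ^ δ..R₂ ^ δ, y ^ (2 / δ - 1) * (gB * y / (gB * y + gE))) := by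
  set a := R₁ ^ δ with ha
  set b := R₂ ^ δ with hb
  have h0a : 0 < a := Real.rpow_pos_of_pos hR₁ δ
  have hab : a < b := Real.rpow_lt_rpow hR₁.le hR hδ
  have hRR : (0:ℝ) < R₂ ^ 2 - R₁ ^ 2 := by
    have := pow_lt_pow_left₀ hR hR₁.le (two_ne_zero)
    linarith
  have hpos : ∀ y ∈ Set.Icc a b, 0 < y := fun y hy => h0a.trans_le hy.1
  have hg : ∀ y ∈ Set.Icc a b, 0 ≤ gB * y / (gB * y + gE) := fun y hy => by
    have := hpos y hy; positivity
  rw [pathLossMeasure, lintegral_withDensity_eq_lintegral_mul _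
    (pathLoss_density_meas δ R₁ R₂) (by fun_prop)]
  have h0 : ∀ y : ℝ,
      (ENNReal.ofReal (if y ∈ Set.Icc a b then 2 / δ * y ^ (2 / δ - 1) / (R₂ ^ 2 - R₁ ^ 2) else 0)
        * ENNReal.ofReal (gB * y / (gB * y + gE)))
      = Set.indicator (Set.Icc a b)
          (fun y => ENNReal.ofReal
            (2 / δ * y ^ (2 / δ - 1) / (R₂ ^ 2 - R₁ ^ 2) * (gB * y / (gB * y + gE)))) y := by
    intro y
    by_cases hy : y ∈ Set.Icc a b
    · rw [if_pos hy, indicator_of_mem hy, ← ENNReal.ofReal_mul ?_]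
      have := hpos y hy; positivity
    · rw [if_neg hy, indicator_of_notMem hy]
      simp
  simp only [Pi.mul_apply, ← ha, ← hb, h0]
  rw [lintegral_indicator measurableSet_Icc _]
  have hcont : ContinuousOn
      (fun y => 2 / δ * y ^ (2 / δ - 1) / (R₂ ^ 2 - R₁ ^ 2) * (gB * y / (gB * y + gE)))
      (Set.Icc a b) := by
    apply ContinuousOn.mul
    · apply ContinuousOn.div_const
      apply ContinuousOn.mul continuousOn_const
      exact fun y hy => (Real.continuousAt_rpow_const y _ (Or.inl (hpos y hy).ne')).continuousWithinAt
    · apply ContinuousOn.div (continuousOn_const.mul continuousOn_id)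
        (by fun_prop)
      intro y hy
      have := hpos y hy; positivity
  have hint : IntegrableOn
      (fun y => 2 / δ * y ^ (2 / δ - 1) / (R₂ ^ 2 - R₁ ^ 2) * (gB * y / (gB * y + gE)))
      (Set.Icc a b) := hcont.integrableOn_compact isCompact_Icc
  rw [← ofReal_integral_eq_lintegral_ofReal hint ?_]
  · congr 1
    rw [integral_Icc_eq_integral_Ioc, ← intervalIntegral.integral_of_le hab.le,
      ← intervalIntegral.integral_const_mul]
    apply intervalIntegral.integral_congr
    intro y _
    have h1 : δ ≠ 0 := hδ.ne'
    have h2 : R₂ ^ 2 - R₁ ^ 2 ≠ 0 := hRR.ne'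
    field_simp
  · rw [EventuallyLE, ae_restrict_iff' measurableSet_Icc]
    refine ae_of_all _ fun y hy => ?_
    have hy0 := hpos y hy
    simp only [Pi.zero_apply]
    positivity

instance expMean.instSFinite (m : ℝ) : SFinite (expMean m) := by
  unfold expMean; infer_instance

instance pathLossMeasure.instSFinite (δ R₁ R₂ : ℝ) : SFinite (pathLossMeasure δ R₁ R₂) := by
  unfold pathLossMeasure; infer_instance

/-- PNZ in the discrete phase shifting model, independent of L. -/
theorem statement_7 {Ω : Type*} [MeasureSpace Ω] [IsProbabilityMeasure (ℙ : Measure Ω)]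
    (L gB gE δ R₁ R₂ : ℝ) (hL : 0 < L) (hgB : 0 < gB) (hgE : 0 < gE) (hδ : 0 < δ)
    (hR₁ : 0 < R₁) (hR : R₁ < R₂)
    (γB X Y : Ω → ℝ) (hmB : Measurable γB) (hmX : Measurable X) (hmY : Measurable Y)
    (hBlaw : Measure.map γB ℙ = expMean (L * gB))
    (hXlaw : Measure.map X ℙ = expMean L)
    (hYlaw : Measure.map Y ℙ = pathLossMeasure δ R₁ R₂)
    (hXY : IndepFun X Y ℙ)
    (hBE : IndepFun γB (fun ω => (X ω, Y ω)) ℙ) :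
    ℙ {ω | gE * X ω / Y ω < γB ω} =
      ENNReal.ofReal (2 / (δ * (R₂ ^ 2 - R₁ ^ 2)) *
        ∫ y in R₁ ^ δ..R₂ ^ δ, y ^ (2 / δ - 1) * (gB * y / (gB * y + gE))) := by
  have h0a : 0 < R₁ ^ δ := Real.rpow_pos_of_pos hR₁ δ
  have hS : MeasurableSet {p : (ℝ × ℝ) × ℝ | gE * p.1.1 / p.1.2 < p.2} :=
    measurableSet_lt (by fun_prop) measurable_snd
  have hmXY : Measurable fun ω => (X ω, Y ω) := hmX.prodMk hmY
  have h1 : ℙ {ω | gE * X ω / Y ω < γB ω}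
      = Measure.map (fun ω => ((X ω, Y ω), γB ω)) ℙ {p : (ℝ × ℝ) × ℝ | gE * p.1.1 / p.1.2 < p.2} := by
    rw [Measure.map_apply (hmXY.prodMk hmB) hS]
    rfl
  have h2 : Measure.map (fun ω => ((X ω, Y ω), γB ω)) ℙ
      = ((expMean L).prod (pathLossMeasure δ R₁ R₂)).prod (expMean (L * gB)) := by
    rw [(indepFun_iff_map_prod_eq_prod_map_map hmXY.aemeasurable hmB.aemeasurable).mp hBE.symm,
      (indepFun_iff_map_prod_eq_prod_map_map hmX.aemeasurable hmY.aemeasurable).mp hXY,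
      hXlaw, hYlaw, hBlaw]
  rw [h1, h2, Measure.prod_apply hS]
  -- a.e. support of the (X,Y) law
  have hAc : ((expMean L).prod (pathLossMeasure δ R₁ R₂))
      ((Ici (0:ℝ) ×ˢ Icc (R₁ ^ δ) (R₂ ^ δ))ᶜ) = 0 := by
    rw [Set.compl_prod_eq_union]
    apply measure_union_null
    · rw [Measure.prod_prod]
      have : (Ici (0:ℝ))ᶜ = {x : ℝ | x < 0} := by ext x; simp
      rw [this, expMean_neg_null, zero_mul]
    · rw [Measure.prod_prod, pathLoss_compl_null, mul_zero]
  have hae : ∀ᵐ p ∂((expMean L).prod (pathLossMeasure δ R₁ R₂)),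
      p ∈ Ici (0:ℝ) ×ˢ Icc (R₁ ^ δ) (R₂ ^ δ) := by
    rw [ae_iff]
    exact hAc
  have hcong : ∫⁻ p, expMean (L * gB) (Prod.mk p ⁻¹' {p : (ℝ × ℝ) × ℝ | gE * p.1.1 / p.1.2 < p.2})
        ∂((expMean L).prod (pathLossMeasure δ R₁ R₂))
      = ∫⁻ p, ENNReal.ofReal (Real.exp (-(gE * p.1 / p.2 / (L * gB))))
        ∂((expMean L).prod (pathLossMeasure δ R₁ R₂)) := by
    apply lintegral_congr_ae
    refine hae.mono fun p hp => ?_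
    show expMean (L * gB) (Prod.mk p ⁻¹' {q : (ℝ × ℝ) × ℝ | gE * q.1.1 / q.1.2 < q.2})
      = ENNReal.ofReal (Real.exp (-(gE * p.1 / p.2 / (L * gB))))
    have hp1 : (0:ℝ) ≤ p.1 := hp.1
    have hp2 : 0 < p.2 := h0a.trans_le hp.2.1
    have ht : 0 ≤ gE * p.1 / p.2 := by positivity
    have hset : Prod.mk p ⁻¹' {q : (ℝ × ℝ) × ℝ | gE * q.1.1 / q.1.2 < q.2}
        = Ioi (gE * p.1 / p.2) := rfl
    rw [hset, expMean_tail (by positivity) ht]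
  rw [hcong, lintegral_prod_symm _ (by fun_prop)]
  have hinner : ∫⁻ y, (∫⁻ x, ENNReal.ofReal (Real.exp (-(gE * x / y / (L * gB)))) ∂(expMean L))
        ∂(pathLossMeasure δ R₁ R₂)
      = ∫⁻ y, ENNReal.ofReal (gB * y / (gB * y + gE)) ∂(pathLossMeasure δ R₁ R₂) := by
    apply lintegral_congr_ae
    have haeY : ∀ᵐ y ∂(pathLossMeasure δ R₁ R₂), y ∈ Icc (R₁ ^ δ) (R₂ ^ δ) := by
      rw [ae_iff]
      exact pathLoss_compl_null
    refine haeY.mono fun y hy => ?_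
    have hy0 : 0 < y := h0a.trans_le hy.1
    have hc : 0 ≤ gE / (y * (L * gB)) := by positivity
    have hrw : ∀ x : ℝ, -(gE * x / y / (L * gB)) = -((gE / (y * (L * gB))) * x) := by
      intro x
      first
      | (field_simp; ring)
      | field_simp
    calc ∫⁻ x, ENNReal.ofReal (Real.exp (-(gE * x / y / (L * gB)))) ∂(expMean L)
        = ∫⁻ x, ENNReal.ofReal (Real.exp (-((gE / (y * (L * gB))) * x))) ∂(expMean L) := by
          apply lintegral_congr fun x => by rw [hrw x]
      _ = ENNReal.ofReal (1 / (1 + gE / (y * (L * gB)) * L)) := expMean_laplace hL hc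
      _ = ENNReal.ofReal (gB * y / (gB * y + gE)) := by
          congr 1
          have hden : 1 + gE / (y * (L * gB)) * L = (gB * y + gE) / (gB * y) := by
            first
            | (field_simp; ring)
            | field_simp
          rw [hden, one_div_div]
  rw [hinner, pathLoss_lintegral hδ hR₁ hR hgB hgE]
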